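/- Let C be a finitely complete category, 𝒫 a class of objects of C, and A = (A_n)_{n ≥ −1} a 𝒫-exact augmented simplicial object: the augmentation ∂₀ : A₀ → A_{−1} and, for every n ≥ 0, the comparison morphism from A_{n+1} to the simplicial kernel of the faces (∂ᵢ : A_n → A_{n−1})_{i ∈ [n]} are 𝒫-epic. Then for every P ∈ 𝒫 the augmented simplicial set Hom(P, A) is contractible. -/

import Mathlib

namespace Statement15

open CategoryTheory

variable {C : Type*} [Category C]

/-- An augmented simplicial object `A = (Aₙ)_{n ≥ -1}` in a category `C`:
`obj n = Aₙ` for `n ≥ 0`, `pt = A₋₁`, face operators `d n i : Aₙ₊₁ ⟶ Aₙ`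
(meaningful for `i ≤ n + 1`), degeneracy operators `s n i : Aₙ ⟶ Aₙ₊₁`
(meaningful for `i ≤ n`), and augmentation `aug : A₀ ⟶ A₋₁`, subject to the
simplicial identities. -/
structure AugSimp (C : Type*) [Category C] where
  obj : ℕ → C
  pt : C
  d : (n i : ℕ) → (obj (n + 1) ⟶ obj n)
  s : (n i : ℕ) → (obj n ⟶ obj (n + 1))
  aug : obj 0 ⟶ pt
  dd : ∀ n i j, i < j → j ≤ n + 2 →
    d (n + 1) j ≫ d n i = d (n + 1) i ≫ d n (j - 1)
  daug : d 0 0 ≫ aug = d 0 1 ≫ aug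
  ds_lt : ∀ n i j, i < j → j ≤ n + 1 →
    s (n + 1) j ≫ d (n + 1) i = d n i ≫ s n (j - 1)
  ds_eq : ∀ n i, i ≤ n → s n i ≫ d n i = 𝟙 (obj n)
  ds_eq' : ∀ n i, i ≤ n → s n i ≫ d n (i + 1) = 𝟙 (obj n)
  ds_gt : ∀ n i j, j + 1 < i → i ≤ n + 2 →
    s (n + 1) j ≫ d (n + 1) i = d n (i - 1) ≫ s n j
  ss : ∀ n i j, i ≤ j → j ≤ n →
    s n j ≫ s (n + 1) i = s n i ≫ s (n + 1) (j + 1)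

/-- The augmented simplicial set `Hom(P, A)` is contractible: it admits a contraction,
i.e. maps `hₙ : Hom(P, Aₙ) → Hom(P, Aₙ₊₁)` for `n ≥ -1` with `∂₀ hₙ = 1` and
`∂ᵢ hₙ = hₙ₋₁ ∂ᵢ₋₁` for `i > 0`. -/
def AugSimp.ContractibleAt (A : AugSimp C) (P : C) : Prop :=
  ∃ (hm : (P ⟶ A.pt) → (P ⟶ A.obj 0))
    (h : (n : ℕ) → (P ⟶ A.obj n) → (P ⟶ A.obj (n + 1))),
    (∀ x : P ⟶ A.pt, hm x ≫ A.aug = x) ∧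
    (∀ (n : ℕ) (x : P ⟶ A.obj n), h n x ≫ A.d n 0 = x) ∧
    (∀ x : P ⟶ A.obj 0, h 0 x ≫ A.d 0 1 = hm (x ≫ A.aug)) ∧
    (∀ (n : ℕ) (x : P ⟶ A.obj (n + 1)) (i : ℕ), 1 ≤ i → i ≤ n + 2 →
      h (n + 1) x ≫ A.d (n + 1) i = h n (x ≫ A.d n (i - 1)))

/-- The simplicial set `Hom(P, A)` is Kan: every `(n, k)`-horn has a filler.
The first clause treats horns of dimension `1`, the second those of dimension `≥ 2`. -/
def AugSimp.KanAt (A : AugSimp C) (P : C) : Prop :=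
  (∀ k, k ≤ 1 → ∀ a : ℕ → (P ⟶ A.obj 0),
    ∃ b : P ⟶ A.obj 1, ∀ i, i ≤ 1 → i ≠ k → b ≫ A.d 0 i = a i) ∧
  (∀ (n k : ℕ), k ≤ n + 2 → ∀ a : ℕ → (P ⟶ A.obj (n + 1)),
    (∀ i j, i < j → j ≤ n + 2 → i ≠ k → j ≠ k →
      a j ≫ A.d n i = a i ≫ A.d n (j - 1)) →
    ∃ b : P ⟶ A.obj (n + 2), ∀ i, i ≤ n + 2 → i ≠ k → b ≫ A.d (n + 1) i = a i)

section Aux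

open CategoryTheory.Limits

set_option synthInstance.maxHeartbeats 1000000

instance pairProdInst [HasFiniteLimits C] (m k : ℕ) :
    HasLimitsOfShape (Discrete (Fin m × Fin k)) C :=
  hasLimitsOfShape_of_equivalence (Discrete.equivalence finProdFinEquiv.symm)

variable [HasFiniteLimits C] (A : AugSimp C)

noncomputable def kerF (n : ℕ) :
    (∏ᶜ fun _ : Fin (n + 3) => A.obj (n + 1)) ⟶
      (∏ᶜ fun _ : Fin (n + 3) × Fin (n + 3) => A.obj n) :=
  Pi.lift fun p => if p.1.val < p.2.val
    then Pi.π (fun _ : Fin (n + 3) => A.obj (n + 1)) p.2 ≫ A.d n p.1.val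
    else Pi.π (fun _ : Fin (n + 3) => A.obj (n + 1)) p.1 ≫ A.d n 0

noncomputable def kerG (n : ℕ) :
    (∏ᶜ fun _ : Fin (n + 3) => A.obj (n + 1)) ⟶
      (∏ᶜ fun _ : Fin (n + 3) × Fin (n + 3) => A.obj n) :=
  Pi.lift fun p => if p.1.val < p.2.val
    then Pi.π (fun _ : Fin (n + 3) => A.obj (n + 1)) p.1 ≫ A.d n (p.2.val - 1)
    else Pi.π (fun _ : Fin (n + 3) => A.obj (n + 1)) p.1 ≫ A.d n 0

noncomputable abbrev KObj (n : ℕ) : C := equalizer (kerF A n) (kerG A n)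

noncomputable def kmap (n i : ℕ) : KObj A n ⟶ A.obj (n + 1) :=
  equalizer.ι (kerF A n) (kerG A n) ≫
    Pi.π _ (if h : i ≤ n + 2 then (⟨i, by omega⟩ : Fin (n + 3)) else ⟨0, by omega⟩)

lemma kmap_eq (n i : ℕ) (h : i ≤ n + 2) :
    kmap A n i = equalizer.ι (kerF A n) (kerG A n) ≫
      Pi.π (fun _ : Fin (n + 3) => A.obj (n + 1)) ⟨i, by omega⟩ := by
  rw [kmap, dif_pos h]

lemma kerF_pi (n : ℕ) (p : Fin (n + 3) × Fin (n + 3)) :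
    kerF A n ≫ Pi.π (fun _ : Fin (n + 3) × Fin (n + 3) => A.obj n) p =
      if p.1.val < p.2.val
        then Pi.π (fun _ : Fin (n + 3) => A.obj (n + 1)) p.2 ≫ A.d n p.1.val
        else Pi.π (fun _ : Fin (n + 3) => A.obj (n + 1)) p.1 ≫ A.d n 0 := by
  simp [kerF]

lemma kerG_pi (n : ℕ) (p : Fin (n + 3) × Fin (n + 3)) :
    kerG A n ≫ Pi.π (fun _ : Fin (n + 3) × Fin (n + 3) => A.obj n) p =
      if p.1.val < p.2.val
        then Pi.π (fun _ : Fin (n + 3) => A.obj (n + 1)) p.1 ≫ A.d n (p.2.val - 1)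
        else Pi.π (fun _ : Fin (n + 3) => A.obj (n + 1)) p.1 ≫ A.d n 0 := by
  simp [kerG]

lemma kmap_rel (n : ℕ) : ∀ i j, i < j → j ≤ n + 2 →
    kmap A n j ≫ A.d n i = kmap A n i ≫ A.d n (j - 1) := by
  intro i j hij hj
  have h2 : equalizer.ι (kerF A n) (kerG A n) ≫
        (kerF A n ≫ Pi.π (fun _ : Fin (n + 3) × Fin (n + 3) => A.obj n)
          (⟨i, by omega⟩, ⟨j, by omega⟩)) =
      equalizer.ι (kerF A n) (kerG A n) ≫
        (kerG A n ≫ Pi.π (fun _ : Fin (n + 3) × Fin (n + 3) => A.obj n)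
          (⟨i, by omega⟩, ⟨j, by omega⟩)) := by
    rw [← Category.assoc, ← Category.assoc, equalizer.condition]
  rw [kerF_pi, kerG_pi] at h2
  simp only [if_pos (show i < j from hij)] at h2
  rw [kmap_eq A n i (by omega), kmap_eq A n j hj]
  simp only [Category.assoc]
  exact h2

lemma kmap_univ (n : ℕ) : ∀ (W : C) (c : ℕ → (W ⟶ A.obj (n + 1))),
    (∀ i j, i < j → j ≤ n + 2 → c j ≫ A.d n i = c i ≫ A.d n (j - 1)) →
    ∃! m : W ⟶ KObj A n, ∀ i, i ≤ n + 2 → m ≫ kmap A n i = c i := by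
  intro W c hc
  have hcond : (Pi.lift fun i : Fin (n + 3) => c i.val) ≫ kerF A n =
      (Pi.lift fun i : Fin (n + 3) => c i.val) ≫ kerG A n := by
    apply Pi.hom_ext
    intro p
    rw [Category.assoc, Category.assoc, kerF_pi, kerG_pi]
    by_cases h : p.1.val < p.2.val
    · rw [if_pos h, if_pos h, ← Category.assoc, ← Category.assoc]
      simp only [limit.lift_π, Fan.mk_π_app]
      exact hc p.1.val p.2.val h (by omega)
    · rw [if_neg h, if_neg h]
  refine ⟨equalizer.lift _ hcond, ?_, ?_⟩
  · intro i hi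
    rw [kmap_eq A n i hi, ← Category.assoc, equalizer.lift_ι]
    simp
  · intro m' hm'
    apply equalizer.hom_ext
    apply Pi.hom_ext
    intro b
    rw [equalizer.lift_ι]
    have := hm' b.val (by omega)
    rw [kmap_eq A n b.val (by omega)] at this
    simpa using this

noncomputable def lmap (n : ℕ) : A.obj (n + 2) ⟶ KObj A n :=
  equalizer.lift (Pi.lift fun i : Fin (n + 3) => A.d (n + 1) i.val) (by
    apply Pi.hom_ext
    intro p
    rw [Category.assoc, Category.assoc, kerF_pi, kerG_pi]
    by_cases h : p.1.val < p.2.val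
    · rw [if_pos h, if_pos h, ← Category.assoc, ← Category.assoc]
      simp only [limit.lift_π, Fan.mk_π_app]
      exact A.dd n p.1.val p.2.val h (by omega)
    · rw [if_neg h, if_neg h])

lemma lmap_spec (n : ℕ) : ∀ i, i ≤ n + 2 → lmap A n ≫ kmap A n i = A.d (n + 1) i := by
  intro i hi
  rw [kmap_eq A n i hi, lmap, ← Category.assoc, equalizer.lift_ι]
  simp

/-- Invariant carried through the recursion. -/
def Good {P : C} (n : ℕ) (f : (P ⟶ A.obj n) → (P ⟶ A.obj (n + 1))) : Prop :=
  (∀ z, f z ≫ A.d n 0 = z) ∧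
  ∀ (x : P ⟶ A.obj (n + 1)) (i j : ℕ), 1 ≤ i → i < j → j ≤ n + 2 →
    f (x ≫ A.d n (j - 1)) ≫ A.d n i = f (x ≫ A.d n (i - 1)) ≫ A.d n (j - 1)

end Aux

/-- Dependent recursion helper. -/
def natSeq {T : ℕ → Sort*} (b : T 0) (s : ∀ n, T n → T (n + 1)) : ∀ n, T n
  | 0 => b
  | n + 1 => s n (natSeq b s n)




/-- Let `C` be finitely complete, `Pcl` a class of objects and `A` a
`Pcl`-exact augmented simplicial object: the augmentation is `Pcl`-epic and, for every
`n ≥ 0`, the comparison morphism from `Aₙ₊₁` to the simplicial kernel of the faces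
`(∂ᵢ : Aₙ ⟶ Aₙ₋₁)_{i ∈ [n]}` is `Pcl`-epic (the clause `haug` is the augmentation,
`hker0` the case `n = 0`, i.e. the kernel pair of the augmentation, and `hker` the case
`n ≥ 1`).  Then for every `P ∈ Pcl` the augmented simplicial set `Hom(P, A)` is
contractible. -/
theorem statement15 [Limits.HasFiniteLimits C]
    (Pcl : C → Prop) (A : AugSimp C)
    (haug : ∀ P : C, Pcl P → ∀ y : P ⟶ A.pt, ∃ x : P ⟶ A.obj 0, x ≫ A.aug = y)
    (hker0 : ∀ (K : C) (k₀ k₁ : K ⟶ A.obj 0),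
      k₁ ≫ A.aug = k₀ ≫ A.aug →
      (∀ (W : C) (c₀ c₁ : W ⟶ A.obj 0), c₁ ≫ A.aug = c₀ ≫ A.aug →
        ∃! m : W ⟶ K, m ≫ k₀ = c₀ ∧ m ≫ k₁ = c₁) →
      ∀ ℓ : A.obj 1 ⟶ K, ℓ ≫ k₀ = A.d 0 0 → ℓ ≫ k₁ = A.d 0 1 →
      ∀ P : C, Pcl P → ∀ y : P ⟶ K, ∃ x : P ⟶ A.obj 1, x ≫ ℓ = y)
    (hker : ∀ (n : ℕ) (K : C) (k : ℕ → (K ⟶ A.obj (n + 1))),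
      (∀ i j, i < j → j ≤ n + 2 → k j ≫ A.d n i = k i ≫ A.d n (j - 1)) →
      (∀ (W : C) (c : ℕ → (W ⟶ A.obj (n + 1))),
        (∀ i j, i < j → j ≤ n + 2 → c j ≫ A.d n i = c i ≫ A.d n (j - 1)) →
        ∃! m : W ⟶ K, ∀ i, i ≤ n + 2 → m ≫ k i = c i) →
      ∀ ℓ : A.obj (n + 2) ⟶ K, (∀ i, i ≤ n + 2 → ℓ ≫ k i = A.d (n + 1) i) →
      ∀ P : C, Pcl P → ∀ y : P ⟶ K, ∃ x : P ⟶ A.obj (n + 2), x ≫ ℓ = y) :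
    ∀ P : C, Pcl P → A.ContractibleAt P := by
  intro P hP
  classical
  -- the contraction at level -1, from the epicity of the augmentation
  set hm : (P ⟶ A.pt) → (P ⟶ A.obj 0) := fun y => (haug P hP y).choose with hmdef
  have hm_spec : ∀ y, hm y ≫ A.aug = y := fun y => (haug P hP y).choose_spec
  -- level 0, via the kernel pair of the augmentation
  have lift0 : ∀ y : P ⟶ Limits.pullback A.aug A.aug, ∃ x : P ⟶ A.obj 1,
      x ≫ Limits.pullback.lift (A.d 0 0) (A.d 0 1) A.daug = y := by
    refine hker0 (Limits.pullback A.aug A.aug) (Limits.pullback.fst _ _)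
      (Limits.pullback.snd _ _) Limits.pullback.condition.symm ?_ _
      (Limits.pullback.lift_fst _ _ _) (Limits.pullback.lift_snd _ _ _) P hP
    intro W c₀ c₁ hcc
    exact ⟨Limits.pullback.lift c₀ c₁ hcc.symm,
      ⟨Limits.pullback.lift_fst _ _ _, Limits.pullback.lift_snd _ _ _⟩,
      fun m' h' => Limits.pullback.hom_ext
        (by rw [Limits.pullback.lift_fst]; exact h'.1)
        (by rw [Limits.pullback.lift_snd]; exact h'.2)⟩
  have key0 : ∀ x : P ⟶ A.obj 0, ∃ fx : P ⟶ A.obj 1,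
      fx ≫ A.d 0 0 = x ∧ fx ≫ A.d 0 1 = hm (x ≫ A.aug) := by
    intro x
    obtain ⟨fx, hfx⟩ := lift0 (Limits.pullback.lift x (hm (x ≫ A.aug)) (hm_spec _).symm)
    refine ⟨fx, ?_, ?_⟩
    · have h1 : Limits.pullback.lift (A.d 0 0) (A.d 0 1) A.daug ≫
          Limits.pullback.fst A.aug A.aug = A.d 0 0 := Limits.pullback.lift_fst _ _ _
      rw [← h1, ← Category.assoc, hfx, Limits.pullback.lift_fst]
    · have h1 : Limits.pullback.lift (A.d 0 0) (A.d 0 1) A.daug ≫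
          Limits.pullback.snd A.aug A.aug = A.d 0 1 := Limits.pullback.lift_snd _ _ _
      rw [← h1, ← Category.assoc, hfx, Limits.pullback.lift_snd]
  have Hbase : ∃ f0 : (P ⟶ A.obj 0) → (P ⟶ A.obj 1),
      Good A 0 f0 ∧ ∀ x, f0 x ≫ A.d 0 1 = hm (x ≫ A.aug) := by
    refine ⟨fun x => (key0 x).choose, ⟨fun z => ((key0 z).choose_spec).1, ?_⟩,
      fun x => ((key0 x).choose_spec).2⟩
    intro x i j h1 hij hj
    have hi : i = 1 := by omega
    have hjv : j = 2 := by omega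
    subst hi; subst hjv
    show (key0 (x ≫ A.d 0 1)).choose ≫ A.d 0 1 = (key0 (x ≫ A.d 0 0)).choose ≫ A.d 0 1
    rw [((key0 _).choose_spec).2, ((key0 _).choose_spec).2]
    congr 1
    rw [Category.assoc, Category.assoc, ← A.daug]
  obtain ⟨f0, hf0good, hf0link⟩ := Hbase
  -- the inductive step, via the higher simplicial kernels
  have Hstep : ∀ (n : ℕ) (f : (P ⟶ A.obj n) → (P ⟶ A.obj (n + 1))), Good A n f →
      ∃ f' : (P ⟶ A.obj (n + 1)) → (P ⟶ A.obj (n + 2)),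
        Good A (n + 1) f' ∧ ∀ x i, 1 ≤ i → i ≤ n + 2 →
          f' x ≫ A.d (n + 1) i = f (x ≫ A.d n (i - 1)) := by
    intro n f hf
    have liftn : ∀ y : P ⟶ KObj A n, ∃ x : P ⟶ A.obj (n + 2), x ≫ lmap A n = y :=
      hker n (KObj A n) (kmap A n) (kmap_rel A n) (kmap_univ A n) (lmap A n)
        (lmap_spec A n) P hP
    have key : ∀ x : P ⟶ A.obj (n + 1), ∃ fx : P ⟶ A.obj (n + 2),
        (fx ≫ A.d (n + 1) 0 = x) ∧ ∀ i, 1 ≤ i → i ≤ n + 2 →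
          fx ≫ A.d (n + 1) i = f (x ≫ A.d n (i - 1)) := by
      intro x
      set c : ℕ → (P ⟶ A.obj (n + 1)) :=
        fun i => if i = 0 then x else f (x ≫ A.d n (i - 1)) with hcdef
      have crel : ∀ i j, i < j → j ≤ n + 2 → c j ≫ A.d n i = c i ≫ A.d n (j - 1) := by
        intro i j hij hj
        by_cases hi : i = 0
        · subst hi
          simp only [hcdef, if_neg (show j ≠ 0 by omega), if_pos rfl]
          exact hf.1 _
        · simp only [hcdef, if_neg (show j ≠ 0 by omega), if_neg hi]
          exact hf.2 x i j (by omega) hij hj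
      obtain ⟨mm, hmm, -⟩ := kmap_univ A n P c crel
      obtain ⟨fx, hfx⟩ := liftn mm
      have hface : ∀ i, i ≤ n + 2 → fx ≫ A.d (n + 1) i = c i := by
        intro i hi
        rw [← lmap_spec A n i hi, ← Category.assoc, hfx]
        exact hmm i hi
      refine ⟨fx, ?_, ?_⟩
      · rw [hface 0 (by omega)]; simp [hcdef]
      · intro i h1 hi
        rw [hface i hi, hcdef]
        simp only [if_neg (show i ≠ 0 by omega)]
    refine ⟨fun x => (key x).choose, ⟨fun z => ((key z).choose_spec).1, ?_⟩,
      fun x i h1 hi => ((key x).choose_spec).2 i h1 hi⟩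
    intro x i j h1 hij hj
    rw [((key _).choose_spec).2 i h1 (by omega),
      ((key _).choose_spec).2 (j - 1) (by omega) (by omega)]
    congr 1
    rw [Category.assoc, Category.assoc, A.dd n (i - 1) (j - 1) (by omega) (by omega)]
  -- assemble the contraction by recursion
  let T : ℕ → Type _ := fun n => {f : (P ⟶ A.obj n) → (P ⟶ A.obj (n + 1)) // Good A n f}
  let stepf : ∀ n, T n → T (n + 1) := fun n p =>
    ⟨(Hstep n p.1 p.2).choose, (Hstep n p.1 p.2).choose_spec.1⟩
  let seq : ∀ n, T n := natSeq ⟨f0, hf0good⟩ stepf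
  refine ⟨hm, fun n => (seq n).1, hm_spec, fun n x => (seq n).2.1 x, ?_, ?_⟩
  · intro x
    exact hf0link x
  · intro n x i h1 hi
    have hs : seq (n + 1) = stepf n (seq n) := rfl
    calc (seq (n + 1)).1 x ≫ A.d (n + 1) i
        = (Hstep n (seq n).1 (seq n).2).choose x ≫ A.d (n + 1) i := by rw [hs]
      _ = (seq n).1 (x ≫ A.d n (i - 1)) :=
          (Hstep n (seq n).1 (seq n).2).choose_spec.2 x i h1 hi


end Statement15
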